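/- For an integer μ ≥ 1, let Q_μ be the 4×4 real matrix with rows and columns indexed by the transient states x₁, x₂, x₃, x₄, whose only nonzero entries are Q_μ(x₂,x₁) = 1, Q_μ(x₄,x₃) = 2^{−μ}, and Q_μ(x₄,x₂) = 1 − 2^{−μ}. Then I − Q_μ is invertible, and the vector of expected absorption times m = (I − Q_μ)⁻¹·𝟙 satisfies m(x₁) = 1, m(x₂) = 2, m(x₃) = 1, and m(x₄) = 3 − 2^{−μ}. Consequently max_X m(X) = 3 − 2^{−μ} is strictly increasing in μ, it equals 5/2 for μ = 1, and hence the ∞-scalability (5/2)/(3 − 2^{−μ}) is strictly less than 1 for every μ ≥ 2. (Q_μ is the transient submatrix of the (1+μ) elitist EA of the paper's counterexample with ε = 0, showing that increasing the population size increases the maximal expected number of generations to find the optimum.) -/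
import Mathlib


open Matrix

/-- The transient transition submatrix of the `(1+μ)` elitist EA of the paper's first
counterexample (with `ε = 0`): states `x₁,x₂,x₃,x₄` are indexed by `0,1,2,3`; the only
nonzero entries are `Q(x₂,x₁) = 1`, `Q(x₄,x₃) = 2⁻ᵘ` and `Q(x₄,x₂) = 1 - 2⁻ᵘ`. -/
noncomputable def Qmu (μ : ℕ) : Matrix (Fin 4) (Fin 4) ℝ := fun i j =>
  if i = 1 ∧ j = 0 then 1
  else if i = 3 ∧ j = 2 then (1 / 2 : ℝ) ^ μ
  else if i = 3 ∧ j = 1 then 1 - (1 / 2 : ℝ) ^ μ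
  else 0

lemma det_one_sub_Qmu (μ : ℕ) : (1 - Qmu μ).det = 1 := by
  rw [Matrix.det_of_lowerTriangular]
  · simp [Qmu, Matrix.sub_apply, Matrix.one_apply, Fin.prod_univ_four]
  · intro i j hij
    rw [OrderDual.toDual_lt_toDual] at hij
    fin_cases i <;> fin_cases j <;> simp_all [Qmu, Matrix.sub_apply, Matrix.one_apply]

lemma isUnit_one_sub_Qmu (μ : ℕ) : IsUnit (1 - Qmu μ) := by
  rw [Matrix.isUnit_iff_isUnit_det, det_one_sub_Qmu]; exact isUnit_one

lemma mvec (μ : ℕ) :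
    (1 - Qmu μ)⁻¹ *ᵥ (fun _ => 1) = ![1, 2, 1, 3 - (1 / 2 : ℝ) ^ μ] := by
  have h : (1 - Qmu μ) *ᵥ ![1, 2, 1, 3 - (1 / 2 : ℝ) ^ μ] = (fun _ => 1) := by
    funext i
    fin_cases i <;>
      simp [Matrix.mulVec, dotProduct, Qmu, Matrix.sub_apply, Matrix.one_apply,
        Fin.sum_univ_four] <;> ring
  rw [← h, Matrix.mulVec_mulVec, Matrix.nonsing_inv_mul _ (by
    rw [det_one_sub_Qmu]; exact isUnit_one), Matrix.one_mulVec]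

/-- for `μ ≥ 1`, `I - Q_μ` is invertible, the expected absorption times
`m = (I - Q_μ)⁻¹ · 𝟙` are `m(x₁) = 1`, `m(x₂) = 2`, `m(x₃) = 1`, `m(x₄) = 3 - 2⁻ᵘ`;
hence `max_X m(X) = 3 - 2⁻ᵘ`, which is strictly increasing in `μ`, equals `5/2` at
`μ = 1`, and so the ∞-scalability `(5/2)/(3 - 2⁻ᵘ)` is `< 1` for every `μ ≥ 2`. -/
theorem stmt_13 (μ : ℕ) (hμ : 1 ≤ μ) :
    IsUnit (1 - Qmu μ) ∧
    (let m : Fin 4 → ℝ := (1 - Qmu μ)⁻¹ *ᵥ (fun _ => 1);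
      m 0 = 1 ∧ m 1 = 2 ∧ m 2 = 1 ∧ m 3 = 3 - (1 / 2 : ℝ) ^ μ ∧
      (⨆ X, m X) = 3 - (1 / 2 : ℝ) ^ μ) ∧
    (∀ ν : ℕ, μ < ν → (3 : ℝ) - (1 / 2 : ℝ) ^ μ < 3 - (1 / 2 : ℝ) ^ ν) ∧
    ((3 : ℝ) - (1 / 2 : ℝ) ^ (1 : ℕ) = 5 / 2) ∧
    (2 ≤ μ → (5 / 2 : ℝ) / (3 - (1 / 2 : ℝ) ^ μ) < 1) := by
  have ht : (1 / 2 : ℝ) ^ μ ≤ 1 / 2 := by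
    calc (1 / 2 : ℝ) ^ μ ≤ (1 / 2 : ℝ) ^ 1 :=
          pow_le_pow_of_le_one (by norm_num) (by norm_num) hμ
      _ = 1 / 2 := pow_one _
  have ht' : ((2 : ℝ) ^ μ)⁻¹ ≤ 1 / 2 := by
    rwa [div_pow, one_pow, one_div ((2:ℝ)^μ)] at ht
  refine ⟨isUnit_one_sub_Qmu μ, ?_, ?_, by norm_num, ?_⟩
  · intro m
    have hm : m = ![1, 2, 1, 3 - (1 / 2 : ℝ) ^ μ] := mvec μ
    rw [hm]
    refine ⟨rfl, rfl, rfl, rfl, ?_⟩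
    apply le_antisymm
    · apply ciSup_le
      intro i
      fin_cases i <;> simp <;> linarith
    · have := le_ciSup (f := ![1, 2, 1, 3 - (1 / 2 : ℝ) ^ μ])
        (Set.Finite.bddAbove (Set.finite_range _)) 3
      simpa using this
  · intro ν hν
    have : (1 / 2 : ℝ) ^ ν < (1 / 2 : ℝ) ^ μ :=
      pow_lt_pow_right_of_lt_one₀ (by norm_num) (by norm_num) hν
    linarith
  · intro h2
    have ht2 : (1 / 2 : ℝ) ^ μ ≤ 1 / 4 := by
      calc (1 / 2 : ℝ) ^ μ ≤ (1 / 2 : ℝ) ^ 2 :=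
            pow_le_pow_of_le_one (by norm_num) (by norm_num) h2
        _ = 1 / 4 := by norm_num
    rw [div_lt_one (by linarith)]
    linarith
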